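/- Let 0 < a < 1, α > 0 with α ≠ 1 and α + a ≠ 1, and 1 < t < 5/4. Define Ψ(t) = ∫_0^1 (t-s)^{-α} (1-s)^{-a} ds. Then there exists a constant c > 1 depending only on a, α such that: if α + a > 1, then c^{-1}(t-1)^{1-α-a} ≤ Ψ(t) ≤ c(t-1)^{1-α-a}; and if α + a < 1, then c^{-1} ≤ Ψ(t) ≤ c. -/

import Mathlib

set_option maxHeartbeats 1000000


open Real intervalIntegral MeasureTheory

lemma aux_int_one_sub (q u v : ℝ) (hq : -1 < q) :
    IntervalIntegrable (fun s => (1 - s) ^ q) volume u v := by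
  have h := (intervalIntegral.intervalIntegrable_rpow'
    (a := 1 - u) (b := 1 - v) hq).comp_sub_left 1
  simpa using h

lemma aux_val_one_sub (q u v : ℝ)
    (h : -1 < q ∨ q ≠ -1 ∧ (0:ℝ) ∉ Set.uIcc (1 - v) (1 - u)) :
    (∫ s in u..v, (1 - s) ^ q) = ((1 - u) ^ (q + 1) - (1 - v) ^ (q + 1)) / (q + 1) := by
  have h1 := intervalIntegral.integral_comp_sub_left (a := u) (b := v) (fun x => x ^ q) 1
  rw [h1, integral_rpow h]

theorem stmt_9 (a α : ℝ) (ha0 : 0 < a) (ha1 : a < 1) (hα : 0 < α)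
    (hα1 : α ≠ 1) (hne : α + a ≠ 1) :
    ∃ c : ℝ, 1 < c ∧ ∀ t : ℝ, 1 < t → t < 5/4 →
      (α + a > 1 →
        c⁻¹ * (t - 1) ^ (1 - α - a) ≤
          (∫ s in (0:ℝ)..1, (t - s) ^ (-α) * (1 - s) ^ (-a)) ∧
        (∫ s in (0:ℝ)..1, (t - s) ^ (-α) * (1 - s) ^ (-a)) ≤
          c * (t - 1) ^ (1 - α - a)) ∧
      (α + a < 1 →
        c⁻¹ ≤ (∫ s in (0:ℝ)..1, (t - s) ^ (-α) * (1 - s) ^ (-a)) ∧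
        (∫ s in (0:ℝ)..1, (t - s) ^ (-α) * (1 - s) ^ (-a)) ≤ c) := by
  have h1a : (0:ℝ) < 1 - a := by linarith
  have habs : (0:ℝ) < |α + a - 1| := abs_pos.mpr (sub_ne_zero.mpr hne)
  have h2α : (1:ℝ) ≤ (2:ℝ) ^ α := Real.one_le_rpow (by norm_num) hα.le
  have h2α0 : (0:ℝ) < (2:ℝ) ^ α := by linarith
  have h54 : (0:ℝ) < (5/4:ℝ) ^ α := Real.rpow_pos_of_pos (by norm_num) α
  have h54le : ((5/4:ℝ)) ^ α ≤ 2 ^ α := Real.rpow_le_rpow (by norm_num) (by norm_num) hα.le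
  have hinv1 : (0:ℝ) < 1/(1-a) := by positivity
  have hinv2 : (0:ℝ) < 1/|α+a-1| := by positivity
  obtain ⟨c, hcdef⟩ : ∃ c : ℝ, c = 2 ^ α + (5/4:ℝ) ^ α + 1/(1-a) + 1/|α+a-1| + 1 := ⟨_, rfl⟩
  refine ⟨c, by rw [hcdef]; linarith, ?_⟩
  intro t ht1 ht2
  have hc0 : (0:ℝ) < c := by rw [hcdef]; positivity
  have hε : 0 < t - 1 := by linarith
  have hε1 : t - 1 < 1 := by linarith
  have hm0 : (0:ℝ) ≤ 2 - t := by linarith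
  have hm1 : 2 - t ≤ 1 := by linarith
  have hm1' : 2 - t < 1 := by linarith
  -- nonnegativity of the integrand on [0, 1]
  have hfpos : ∀ s : ℝ, s ∈ Set.Icc (0:ℝ) 1 → 0 ≤ (t - s) ^ (-α) * (1 - s) ^ (-a) := by
    intro s hs
    exact mul_nonneg (Real.rpow_nonneg (by linarith [hs.2]) _)
      (Real.rpow_nonneg (by linarith [hs.2]) _)
  -- integrability of (1-s)^(-a)
  have hIa : ∀ u v : ℝ, IntervalIntegrable (fun s => (1 - s) ^ (-a)) volume u v :=
    fun u v => aux_int_one_sub (-a) u v (by linarith)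
  -- integrability of the main integrand
  have hIf01 : IntervalIntegrable (fun s => (t - s) ^ (-α) * (1 - s) ^ (-a)) volume 0 1 := by
    apply IntervalIntegrable.mono_fun' ((hIa 0 1).const_mul ((t-1) ^ (-α)))
    · apply Measurable.aestronglyMeasurable
      fun_prop
    · filter_upwards [MeasureTheory.ae_restrict_mem measurableSet_uIoc] with s hs
      rw [Set.uIoc_of_le (by norm_num : (0:ℝ) ≤ 1)] at hs
      have hts : 0 < t - s := by linarith [hs.2]
      have h1s : (0:ℝ) ≤ 1 - s := by linarith [hs.2]
      rw [Real.norm_eq_abs, abs_of_nonneg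
        (mul_nonneg (Real.rpow_nonneg hts.le _) (Real.rpow_nonneg h1s _))]
      exact mul_le_mul_of_nonneg_right
        (Real.rpow_le_rpow_of_nonpos hε (by linarith [hs.2]) (by linarith))
        (Real.rpow_nonneg h1s _)
  have hsub1 : Set.uIcc (0:ℝ) (2-t) ⊆ Set.uIcc (0:ℝ) 1 := by
    rw [Set.uIcc_of_le hm0, Set.uIcc_of_le (by norm_num : (0:ℝ) ≤ 1)]
    exact Set.Icc_subset_Icc le_rfl hm1
  have hsub2 : Set.uIcc (2-t) (1:ℝ) ⊆ Set.uIcc (0:ℝ) 1 := by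
    rw [Set.uIcc_of_le hm1, Set.uIcc_of_le (by norm_num : (0:ℝ) ≤ 1)]
    exact Set.Icc_subset_Icc hm0 le_rfl
  have hIf1 := hIf01.mono_set hsub1
  have hIf2 := hIf01.mono_set hsub2
  have hsplit : (∫ s in (0:ℝ)..1, (t - s) ^ (-α) * (1 - s) ^ (-a))
      = (∫ s in (0:ℝ)..(2-t), (t - s) ^ (-α) * (1 - s) ^ (-a))
        + (∫ s in (2-t)..(1:ℝ), (t - s) ^ (-α) * (1 - s) ^ (-a)) :=
    (intervalIntegral.integral_add_adjacent_intervals hIf1 hIf2).symm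
  -- integrability of (1-s)^(-(α+a)) on [0, 2-t]
  have hIq : IntervalIntegrable (fun s => (1 - s) ^ (-(α+a))) volume 0 (2-t) := by
    apply ContinuousOn.intervalIntegrable
    apply ContinuousOn.rpow_const (continuous_const.sub continuous_id).continuousOn
    intro s hs
    rw [Set.uIcc_of_le hm0] at hs
    left
    have : s ≤ 2 - t := hs.2
    intro h0
    simp only [Pi.sub_apply, id_eq] at h0
    linarith [sub_eq_zero.mp h0]
  -- upper bound for I₁ by ∫ (1-s)^(-(α+a))
  have hI1up : (∫ s in (0:ℝ)..(2-t), (t - s) ^ (-α) * (1 - s) ^ (-a))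
      ≤ (1 - (t-1) ^ (1 - α - a)) / (1 - α - a) := by
    have hmono : (∫ s in (0:ℝ)..(2-t), (t - s) ^ (-α) * (1 - s) ^ (-a))
        ≤ ∫ s in (0:ℝ)..(2-t), (1 - s) ^ (-(α+a)) := by
      apply intervalIntegral.integral_mono_on hm0 hIf1 hIq
      intro s hs
      have h1s : 0 < 1 - s := by linarith [hs.2]
      rw [show -(α+a) = -α + -a by ring, Real.rpow_add h1s]
      exact mul_le_mul_of_nonneg_right
        (Real.rpow_le_rpow_of_nonpos h1s (by linarith) (by linarith))
        (Real.rpow_nonneg h1s.le _)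
    have hval : (∫ s in (0:ℝ)..(2-t), (1 - s) ^ (-(α+a)))
        = (1 - (t-1) ^ (1 - α - a)) / (1 - α - a) := by
      rw [aux_val_one_sub (-(α+a)) 0 (2-t) (Or.inr ⟨by intro h; apply hne; linarith [neg_eq_iff_eq_neg.mp h], by
        rw [Set.uIcc_of_le (by linarith : (1:ℝ) - (2-t) ≤ 1 - 0)]
        intro h0
        have := h0.1
        linarith⟩)]
      rw [show (1:ℝ) - 0 = 1 by ring, Real.one_rpow,
        show (1:ℝ) - (2-t) = t - 1 by ring, show -(α+a) + 1 = 1 - α - a by ring]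
    linarith [hmono, hval.le, hval.ge]
  -- upper bound for I₂
  have hI2up : (∫ s in (2-t)..(1:ℝ), (t - s) ^ (-α) * (1 - s) ^ (-a))
      ≤ (t-1) ^ (1 - α - a) / (1-a) := by
    have hmono : (∫ s in (2-t)..(1:ℝ), (t - s) ^ (-α) * (1 - s) ^ (-a))
        ≤ ∫ s in (2-t)..(1:ℝ), (t-1) ^ (-α) * (1 - s) ^ (-a) := by
      apply intervalIntegral.integral_mono_on hm1 hIf2 ((hIa (2-t) 1).const_mul _)
      intro s hs
      have h1s : (0:ℝ) ≤ 1 - s := by linarith [hs.2]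
      exact mul_le_mul_of_nonneg_right
        (Real.rpow_le_rpow_of_nonpos hε (by linarith [hs.2]) (by linarith))
        (Real.rpow_nonneg h1s _)
    have hval : (∫ s in (2-t)..(1:ℝ), (t-1) ^ (-α) * (1 - s) ^ (-a))
        = (t-1) ^ (-α) * ((t-1) ^ (1-a) / (1-a)) := by
      rw [intervalIntegral.integral_const_mul,
        aux_val_one_sub (-a) (2-t) 1 (Or.inl (by linarith))]
      rw [show (1:ℝ) - (2-t) = t - 1 by ring, sub_self,
        Real.zero_rpow (by linarith : -a + 1 ≠ 0), show -a + 1 = 1 - a by ring]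
      ring
    have hcomb : (t-1) ^ (-α) * ((t-1) ^ (1-a) / (1-a)) = (t-1) ^ (1 - α - a) / (1-a) := by
      rw [show (1:ℝ) - α - a = -α + (1-a) by ring, Real.rpow_add hε]
      ring
    calc (∫ s in (2-t)..(1:ℝ), (t - s) ^ (-α) * (1 - s) ^ (-a))
        ≤ (t-1) ^ (-α) * ((t-1) ^ (1-a) / (1-a)) := hval ▸ hmono
      _ = (t-1) ^ (1 - α - a) / (1-a) := hcomb
  -- lower bound for I₂ (used in the supercritical case)
  have hI2lo : (2:ℝ) ^ (-α) / (1-a) * (t-1) ^ (1 - α - a)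
      ≤ (∫ s in (2-t)..(1:ℝ), (t - s) ^ (-α) * (1 - s) ^ (-a)) := by
    have hmono : (∫ s in (2-t)..(1:ℝ), (2*(t-1)) ^ (-α) * (1 - s) ^ (-a))
        ≤ ∫ s in (2-t)..(1:ℝ), (t - s) ^ (-α) * (1 - s) ^ (-a) := by
      apply intervalIntegral.integral_mono_on hm1 ((hIa (2-t) 1).const_mul _) hIf2
      intro s hs
      have hts : 0 < t - s := by linarith [hs.2]
      have h1s : (0:ℝ) ≤ 1 - s := by linarith [hs.2]
      exact mul_le_mul_of_nonneg_right
        (Real.rpow_le_rpow_of_nonpos hts (by linarith [hs.1]) (by linarith))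
        (Real.rpow_nonneg h1s _)
    have hval : (∫ s in (2-t)..(1:ℝ), (2*(t-1)) ^ (-α) * (1 - s) ^ (-a))
        = (2*(t-1)) ^ (-α) * ((t-1) ^ (1-a) / (1-a)) := by
      rw [intervalIntegral.integral_const_mul,
        aux_val_one_sub (-a) (2-t) 1 (Or.inl (by linarith))]
      rw [show (1:ℝ) - (2-t) = t - 1 by ring, sub_self,
        Real.zero_rpow (by linarith : -a + 1 ≠ 0), show -a + 1 = 1 - a by ring]
      ring
    have hcomb : (2*(t-1)) ^ (-α) * ((t-1) ^ (1-a) / (1-a))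
        = (2:ℝ) ^ (-α) / (1-a) * (t-1) ^ (1 - α - a) := by
      rw [Real.mul_rpow (by norm_num) hε.le,
        show (1:ℝ) - α - a = -α + (1-a) by ring, Real.rpow_add hε]
      ring
    calc (2:ℝ) ^ (-α) / (1-a) * (t-1) ^ (1 - α - a)
        = (∫ s in (2-t)..(1:ℝ), (2*(t-1)) ^ (-α) * (1 - s) ^ (-a)) := by rw [hval, hcomb]
      _ ≤ _ := hmono
  -- lower bound for I₁ (used in the subcritical case)
  have hI1lo : (2 - t) * (5/4:ℝ) ^ (-α)
      ≤ (∫ s in (0:ℝ)..(2-t), (t - s) ^ (-α) * (1 - s) ^ (-a)) := by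
    have hmono : (∫ s in (0:ℝ)..(2-t), (5/4:ℝ) ^ (-α))
        ≤ ∫ s in (0:ℝ)..(2-t), (t - s) ^ (-α) * (1 - s) ^ (-a) := by
      apply intervalIntegral.integral_mono_on hm0 intervalIntegrable_const hIf1
      intro s hs
      have hts : 0 < t - s := by linarith [hs.2]
      have h1s : (0:ℝ) < 1 - s := by linarith [hs.2]
      have h1 : (5/4:ℝ) ^ (-α) ≤ (t - s) ^ (-α) :=
        Real.rpow_le_rpow_of_nonpos hts (by linarith [hs.1]) (by linarith)
      have h2 : (1:ℝ) ≤ (1 - s) ^ (-a) := by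
        have := Real.rpow_le_rpow_of_nonpos h1s (by linarith [hs.1] : 1 - s ≤ 1)
          (by linarith : -a ≤ 0)
        rwa [Real.one_rpow] at this
      calc (5/4:ℝ) ^ (-α) = (5/4:ℝ) ^ (-α) * 1 := by ring
        _ ≤ (t - s) ^ (-α) * (1 - s) ^ (-a) :=
          mul_le_mul h1 h2 (by norm_num) (Real.rpow_nonneg hts.le _)
    rw [intervalIntegral.integral_const, smul_eq_mul, sub_zero] at hmono
    exact hmono
  -- nonnegativity of each piece
  have hI1nn : 0 ≤ ∫ s in (0:ℝ)..(2-t), (t - s) ^ (-α) * (1 - s) ^ (-a) :=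
    intervalIntegral.integral_nonneg hm0 (fun s hs => hfpos s ⟨hs.1, by linarith [hs.2]⟩)
  have hI2nn : 0 ≤ ∫ s in (2-t)..(1:ℝ), (t - s) ^ (-α) * (1 - s) ^ (-a) :=
    intervalIntegral.integral_nonneg hm1 (fun s hs => hfpos s ⟨by linarith [hs.1], hs.2⟩)
  have hX : (0:ℝ) < (t-1) ^ (1 - α - a) := Real.rpow_pos_of_pos hε _
  constructor
  · -- supercritical case
    intro hp
    have hd : (0:ℝ) < α + a - 1 := by linarith
    have habs' : |α + a - 1| = α + a - 1 := abs_of_pos hd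
    constructor
    · -- lower bound
      have h1 : c⁻¹ ≤ (2:ℝ) ^ (-α) / (1-a) := by
        have key : (2:ℝ) ^ α * (1-a) ≤ c := by
          have : (2:ℝ) ^ α * (1-a) ≤ 2 ^ α * 1 :=
            mul_le_mul_of_nonneg_left (by linarith) h2α0.le
          simp only [mul_one] at this
          rw [hcdef]; linarith
        have h2 : c⁻¹ ≤ ((2:ℝ) ^ α * (1-a))⁻¹ :=
          inv_anti₀ (by positivity) key
        have h3 : ((2:ℝ) ^ α * (1-a))⁻¹ = (2:ℝ) ^ (-α) / (1-a) := by
          rw [Real.rpow_neg (by norm_num : (0:ℝ) ≤ 2)]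
          field_simp
        linarith [h2, h3.le, h3.ge]
      calc c⁻¹ * (t-1) ^ (1 - α - a)
          ≤ (2:ℝ) ^ (-α) / (1-a) * (t-1) ^ (1 - α - a) :=
            mul_le_mul_of_nonneg_right h1 hX.le
        _ ≤ ∫ s in (2-t)..(1:ℝ), (t - s) ^ (-α) * (1 - s) ^ (-a) := hI2lo
        _ ≤ _ := by rw [hsplit]; linarith
    · -- upper bound
      have h1 : (1 - (t-1) ^ (1 - α - a)) / (1 - α - a)
          ≤ (t-1) ^ (1 - α - a) / (α + a - 1) := by
        have heq : (1 - (t-1) ^ (1 - α - a)) / (1 - α - a)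
            = ((t-1) ^ (1 - α - a) - 1) / (α + a - 1) := by
          rw [div_eq_div_iff (by linarith : (1:ℝ) - α - a ≠ 0) (by linarith : α + a - 1 ≠ 0)]
          ring
        rw [heq]
        exact (div_le_div_iff_of_pos_right hd).mpr (by linarith)
      have h2 : (1/(α+a-1) + 1/(1-a)) ≤ c := by
        rw [hcdef, habs']
        linarith [h2α0, h54]
      calc (∫ s in (0:ℝ)..1, (t - s) ^ (-α) * (1 - s) ^ (-a))
          ≤ (t-1) ^ (1 - α - a) / (α + a - 1) + (t-1) ^ (1 - α - a) / (1-a) := by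
            rw [hsplit]; linarith [hI1up, hI2up, h1]
        _ = (1/(α+a-1) + 1/(1-a)) * (t-1) ^ (1 - α - a) := by ring
        _ ≤ c * (t-1) ^ (1 - α - a) := mul_le_mul_of_nonneg_right h2 hX.le
  · -- subcritical case
    intro hp
    have hd : (0:ℝ) < 1 - α - a := by linarith
    have habs' : |α + a - 1| = 1 - α - a := by rw [abs_of_neg (by linarith)]; ring
    constructor
    · -- lower bound
      have key : c⁻¹ ≤ (3/4:ℝ) * (5/4:ℝ) ^ (-α) := by
        have h1 : (4/3:ℝ) * (5/4:ℝ) ^ α ≤ c := by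
          rw [hcdef]
          linarith [h54le, h54, hinv1, hinv2]
        have h2 : c⁻¹ ≤ ((4/3:ℝ) * (5/4:ℝ) ^ α)⁻¹ :=
          inv_anti₀ (by positivity) h1
        have h3 : ((4/3:ℝ) * (5/4:ℝ) ^ α)⁻¹ = (3/4:ℝ) * (5/4:ℝ) ^ (-α) := by
          rw [Real.rpow_neg (by norm_num : (0:ℝ) ≤ 5/4), mul_inv]
          norm_num
        linarith [h2, h3.le]
      calc c⁻¹ ≤ (3/4:ℝ) * (5/4:ℝ) ^ (-α) := key
        _ ≤ (2 - t) * (5/4:ℝ) ^ (-α) := by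
          apply mul_le_mul_of_nonneg_right (by linarith) (Real.rpow_nonneg (by norm_num) _)
        _ ≤ ∫ s in (0:ℝ)..(2-t), (t - s) ^ (-α) * (1 - s) ^ (-a) := hI1lo
        _ ≤ _ := by rw [hsplit]; linarith
    · -- upper bound
      have hXle1 : (t-1) ^ (1 - α - a) ≤ 1 :=
        Real.rpow_le_one hε.le (by linarith) hd.le
      have h1 : (1 - (t-1) ^ (1 - α - a)) / (1 - α - a) ≤ 1 / (1 - α - a) := by
        exact (div_le_div_iff_of_pos_right hd).mpr (by linarith [hX])
      have h2 : (t-1) ^ (1 - α - a) / (1-a) ≤ 1 / (1-a) :=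
        (div_le_div_iff_of_pos_right h1a).mpr hXle1
      rw [hsplit]
      have hc' : 1/(1-α-a) + 1/(1-a) ≤ c := by
        rw [hcdef, habs']
        linarith [h2α0, h54]
      linarith [hI1up, hI2up, h1, h2]
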